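/- Along any solution of the gyroscopic Chaplygin ball system, the functions F₁(t) = ⟨γ(t), γ(t)⟩, F₂(t) = ½⟨G(t), ω(t)⟩ and F₃(t) = ⟨G(t) + κ, G(t) + κ⟩ are constant in t, for every value of ε. -/

import Mathlib

open Matrix

lemma hasDerivAt_dot3 {u v : ℝ → Fin 3 → ℝ} {u' v' : Fin 3 → ℝ} {t : ℝ}
    (hu : HasDerivAt u u' t) (hv : HasDerivAt v v' t) :
    HasDerivAt (fun s => u s ⬝ᵥ v s) (u' ⬝ᵥ v t + u t ⬝ᵥ v') t := by
  have h : HasDerivAt (fun s => ∑ i, u s i * v s i)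
      (∑ i : Fin 3, (u' i * v t i + u t i * v' i)) t :=
    HasDerivAt.fun_sum (fun i _ => ((hasDerivAt_pi.1 hu i).mul (hasDerivAt_pi.1 hv i)))
  simpa [dotProduct, Finset.sum_add_distrib] using h

lemma hasDerivAt_mulVec3 (M : Matrix (Fin 3) (Fin 3) ℝ) {u : ℝ → Fin 3 → ℝ} {u' : Fin 3 → ℝ} {t : ℝ}
    (hu : HasDerivAt u u' t) :
    HasDerivAt (fun s => M *ᵥ u s) (M *ᵥ u') t := by
  rw [hasDerivAt_pi]
  intro i
  have : HasDerivAt (fun s => ∑ j, M i j * u s j) (∑ j : Fin 3, M i j * u' j) t :=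
    HasDerivAt.fun_sum (fun j _ => (hasDerivAt_pi.1 hu j).const_mul (M i j))
  simpa [Matrix.mulVec, dotProduct] using this

theorem gyroscopic_chaplygin_ball_integrals
    (I₁ I₂ I₃ D ε : ℝ) (hI₁ : 0 < I₁) (hI₂ : 0 < I₂) (hI₃ : 0 < I₃) (hD : 0 < D)
    (κ : Fin 3 → ℝ)
    (ω γ : ℝ → Fin 3 → ℝ) (hω : Differentiable ℝ ω) (hγ : Differentiable ℝ γ)
    (G : ℝ → Fin 3 → ℝ)
    (hG : ∀ t, G t =
      (Matrix.diagonal ![I₁, I₂, I₃] + D • (1 : Matrix (Fin 3) (Fin 3) ℝ)) *ᵥ ω t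
        - (D * (ω t ⬝ᵥ γ t)) • γ t)
    (heqG : ∀ t, HasDerivAt G ((G t + κ) ⨯₃ ω t) t)
    (heqγ : ∀ t, HasDerivAt γ (ε • (γ t ⨯₃ ω t)) t) :
    ∀ t₁ t₂ : ℝ,
      γ t₁ ⬝ᵥ γ t₁ = γ t₂ ⬝ᵥ γ t₂ ∧
      (1 / 2) * (G t₁ ⬝ᵥ ω t₁) = (1 / 2) * (G t₂ ⬝ᵥ ω t₂) ∧
      (G t₁ + κ) ⬝ᵥ (G t₁ + κ) = (G t₂ + κ) ⬝ᵥ (G t₂ + κ) := by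
  set M : Matrix (Fin 3) (Fin 3) ℝ :=
    Matrix.diagonal ![I₁, I₂, I₃] + D • (1 : Matrix (Fin 3) (Fin 3) ℝ) with hM
  -- F₁
  have hF1 : ∀ t, HasDerivAt (fun s => γ s ⬝ᵥ γ s) 0 t := by
    intro t
    have h := hasDerivAt_dot3 (heqγ t) (heqγ t)
    convert h using 1
    have e : (γ t ⨯₃ ω t) ⬝ᵥ γ t = 0 := by
      rw [dotProduct_comm]; exact dot_self_cross _ _
    rw [smul_dotProduct, dotProduct_smul, e, dot_self_cross]
    simp
  -- F₃
  have hF3 : ∀ t, HasDerivAt (fun s => (G s + κ) ⬝ᵥ (G s + κ)) 0 t := by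
    intro t
    have hGκ : HasDerivAt (fun s => G s + κ) ((G t + κ) ⨯₃ ω t) t := (heqG t).add_const κ
    have h := hasDerivAt_dot3 hGκ hGκ
    have e1 : ((G t + κ) ⨯₃ ω t) ⬝ᵥ (G t + κ) = 0 := by
      rw [dotProduct_comm]; exact dot_self_cross _ _
    have e2 : (G t + κ) ⬝ᵥ ((G t + κ) ⨯₃ ω t) = 0 := dot_self_cross _ _
    convert h using 1
    rw [e1, e2, add_zero]
  -- F₂
  have hF2 : ∀ t, HasDerivAt (fun s => (1 / 2 : ℝ) * (G s ⬝ᵥ ω s)) 0 t := by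
    intro t
    have hω' : HasDerivAt ω (deriv ω t) t := (hω t).hasDerivAt
    set ω' : Fin 3 → ℝ := deriv ω t with hω'def
    have hγ' := heqγ t
    have h1 : HasDerivAt (fun s => M *ᵥ ω s) (M *ᵥ ω') t := hasDerivAt_mulVec3 M hω'
    have hc : HasDerivAt (fun s => D * (ω s ⬝ᵥ γ s))
        (D * (ω' ⬝ᵥ γ t + ω t ⬝ᵥ (ε • (γ t ⨯₃ ω t)))) t :=
      (hasDerivAt_dot3 hω' hγ').const_mul D
    have h2 : HasDerivAt (fun s => (D * (ω s ⬝ᵥ γ s)) • γ s)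
        ((D * (ω t ⬝ᵥ γ t)) • (ε • (γ t ⨯₃ ω t))
          + (D * (ω' ⬝ᵥ γ t + ω t ⬝ᵥ (ε • (γ t ⨯₃ ω t)))) • γ t) t := hc.smul hγ'
    have hGfun : G = fun s => M *ᵥ ω s - (D * (ω s ⬝ᵥ γ s)) • γ s := funext hG
    have hGt : HasDerivAt G
        (M *ᵥ ω' - ((D * (ω t ⬝ᵥ γ t)) • (ε • (γ t ⨯₃ ω t))
          + (D * (ω' ⬝ᵥ γ t + ω t ⬝ᵥ (ε • (γ t ⨯₃ ω t)))) • γ t)) t := by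
      rw [hGfun]; exact h1.sub h2
    have huniq := hGt.unique (heqG t)
    have key : ((G t + κ) ⨯₃ ω t) ⬝ᵥ ω t + G t ⬝ᵥ ω' = 0 := by
      have hd := congrArg (fun v => ω t ⬝ᵥ v) huniq
      rw [hG t] at hd ⊢
      simp [hM, cross_apply, dotProduct, Matrix.mulVec, Fin.sum_univ_three,
        Matrix.diagonal, Matrix.one_apply, Matrix.add_apply, Matrix.smul_apply,
        Pi.add_apply, Pi.sub_apply, Pi.smul_apply, smul_eq_mul, Matrix.of_apply,
        Matrix.cons_val_zero, Matrix.cons_val_one, Matrix.head_cons,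
        Matrix.cons_val_two, Matrix.tail_cons, Fin.isValue, if_true, if_false,
        mul_ite, mul_one, mul_zero, ite_mul, zero_mul, one_mul,
        Matrix.vecHead, Matrix.vecTail, Function.comp] at hd ⊢
      linear_combination hd
    have h := (hasDerivAt_dot3 (heqG t) hω').const_mul (1 / 2 : ℝ)
    rw [key, mul_zero] at h
    exact h
  intro t₁ t₂
  refine ⟨?_, ?_, ?_⟩
  · exact is_const_of_deriv_eq_zero (fun x => (hF1 x).differentiableAt)
      (fun x => (hF1 x).deriv) t₁ t₂
  · exact is_const_of_deriv_eq_zero (fun x => (hF2 x).differentiableAt)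
      (fun x => (hF2 x).deriv) t₁ t₂
  · exact is_const_of_deriv_eq_zero (fun x => (hF3 x).differentiableAt)
      (fun x => (hF3 x).deriv) t₁ t₂
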